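/- Let G be an (r+1)-saturated graph on n vertices with e(G) ≥ t_r(n) − εn², and suppose T ⊆ V(G) is a nonempty set with |T| ≤ d_r·ε·n such that G − T is r-partite with parts V₁, …, V_r. Then the number of non-edges of G joining two distinct classes Vᵢ, Vⱼ is at most (d_r + 1)·εn². -/

import Mathlib

open SimpleGraph Finset
open scoped Classical

/-- `t_r(n)`: the number of edges of the `r`-partite Turán graph on `n` vertices. -/
noncomputable def turanEdges (r n : ℕ) : ℕ := (SimpleGraph.turanGraph n r).edgeFinset.card

/-- A graph is `k`-saturated (maximal `K_k`-free) if it is `K_k`-free but adding any edge of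
the complement creates a `K_k`. -/
def Saturated {V : Type} (k : ℕ) (G : SimpleGraph V) : Prop :=
  G.CliqueFree k ∧
    ∀ v w : V, v ≠ w → ¬ G.Adj v w →
      ¬ (G ⊔ SimpleGraph.fromEdgeSet {s(v, w)}).CliqueFree k

lemma ncard_edgeSet_eq {V : Type} [Fintype V] (G : SimpleGraph V) [Fintype G.edgeSet] :
    G.edgeSet.ncard = G.edgeFinset.card :=
  Set.ncard_eq_toFinset_card' _

/-- Twice the edge count of `G` plus twice that of the complement is `n(n-1)`. -/
lemma two_mul_ncard_add_compl {V : Type} [Fintype V] [DecidableEq V] (G : SimpleGraph V) :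
    2 * G.edgeSet.ncard + 2 * Gᶜ.edgeSet.ncard
      = Fintype.card V * (Fintype.card V - 1) := by
  classical
  rw [ncard_edgeSet_eq, ncard_edgeSet_eq,
    ← G.sum_degrees_eq_twice_card_edges, ← Gᶜ.sum_degrees_eq_twice_card_edges,
    ← Finset.sum_add_distrib]
  have h : ∀ v : V, G.degree v + Gᶜ.degree v = Fintype.card V - 1 := by
    intro v
    have h1 := G.degree_compl (v := v)
    have h2 : G.degree v < Fintype.card V := G.degree_lt_card_verts v
    omega
  rw [Finset.sum_congr rfl fun v _ => h v, Finset.sum_const, card_univ, smul_eq_mul]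

/-- Degree bound in the complement of the Turán graph. -/
lemma turan_compl_degree_le (n r : ℕ) (hr : 0 < r) (v : Fin n) :
    (turanGraph n r)ᶜ.degree v ≤ (n - 1) / r := by
  classical
  rw [← card_neighborFinset_eq_degree]
  have key : ((turanGraph n r)ᶜ.neighborFinset v).card ≤
      ((Finset.range ((n - 1) / r + 1)).erase ((v : ℕ) / r)).card := by
    have hmem : ∀ w ∈ (turanGraph n r)ᶜ.neighborFinset v,
        (w : ℕ) / r ∈ (Finset.range ((n - 1) / r + 1)).erase ((v : ℕ) / r) := by
      intro w hw
      rw [mem_neighborFinset, compl_adj] at hw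
      obtain ⟨hne, hmod⟩ := hw
      have hmod' : (v : ℕ) % r = (w : ℕ) % r := by simpa [turanGraph] using hmod
      rw [Finset.mem_erase, Finset.mem_range]
      constructor
      · intro hdiv
        apply hne
        apply Fin.ext
        conv_lhs => rw [← Nat.div_add_mod (v : ℕ) r]
        conv_rhs => rw [← Nat.div_add_mod (w : ℕ) r]
        rw [hdiv, hmod']
      · exact Nat.lt_succ_of_le (Nat.div_le_div_right (Nat.le_sub_one_of_lt w.isLt))
    have hinj : Set.InjOn (fun w : Fin n => (w : ℕ) / r)
        ((turanGraph n r)ᶜ.neighborFinset v : Set (Fin n)) := by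
      intro w1 hw1 w2 hw2 hdiv
      rw [mem_coe, mem_neighborFinset, compl_adj] at hw1 hw2
      have h1 : (v : ℕ) % r = (w1 : ℕ) % r := by simpa [turanGraph] using hw1.2
      have h2 : (v : ℕ) % r = (w2 : ℕ) % r := by simpa [turanGraph] using hw2.2
      apply Fin.ext
      conv_lhs => rw [← Nat.div_add_mod (w1 : ℕ) r]
      conv_rhs => rw [← Nat.div_add_mod (w2 : ℕ) r]
      simp only at hdiv
      rw [hdiv, ← h1, ← h2]
    exact Finset.card_le_card_of_injOn (fun w => (w : ℕ) / r) hmem hinj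
  calc ((turanGraph n r)ᶜ.neighborFinset v).card
      ≤ ((Finset.range ((n - 1) / r + 1)).erase ((v : ℕ) / r)).card := key
    _ ≤ (n - 1) / r := by
        rw [Finset.card_erase_of_mem (by
          rw [Finset.mem_range]
          exact Nat.lt_succ_of_le (Nat.div_le_div_right (Nat.le_sub_one_of_lt v.isLt))),
          Finset.card_range, Nat.add_sub_cancel]

/-- Lower bound on the Turán numbers. -/
lemma turanEdges_lower (n r : ℕ) (hr : 0 < r) :
    n * (n - 1) ≤ 2 * turanEdges r n + n * ((n - 1) / r) := by
  classical
  have hTE : turanEdges r n = (turanGraph n r).edgeSet.ncard := by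
    unfold turanEdges
    exact (ncard_edgeSet_eq _).symm
  have h1 := two_mul_ncard_add_compl (turanGraph n r)
  rw [Fintype.card_fin] at h1
  have h2 : 2 * (turanGraph n r)ᶜ.edgeSet.ncard ≤ n * ((n - 1) / r) := by
    rw [ncard_edgeSet_eq, ← (turanGraph n r)ᶜ.sum_degrees_eq_twice_card_edges]
    calc ∑ v : Fin n, (turanGraph n r)ᶜ.degree v
        ≤ ∑ _v : Fin n, (n - 1) / r :=
          Finset.sum_le_sum fun v _ => turan_compl_degree_le n r hr v
      _ = n * ((n - 1) / r) := by
          rw [Finset.sum_const, card_univ, Fintype.card_fin, smul_eq_mul]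
  omega
set_option maxHeartbeats 2000000 in
/-- Claim `few_nonedges`. Let `G` be `(r+1)`-saturated on `n` vertices
with `e(G) ≥ t_r(n) − εn²`, and let `T` be a nonempty set with `|T| ≤ d·ε·n` such that
`G − T` is `r`-partite with classes `P 0, …, P (r-1)`. Then the number of non-edges of `G`
joining two distinct classes is at most `(d + 1)εn²`. -/
theorem few_nonedges {V : Type} [Fintype V] [DecidableEq V] (G : SimpleGraph V)
    (r n : ℕ) (hr : 2 ≤ r) (hcard : Fintype.card V = n) (ε d : ℝ)
    (hε : 1 / (2 * (r : ℝ) * n) ≤ ε)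
    (hsat : Saturated (r + 1) G)
    (he : (turanEdges r n : ℝ) - ε * (n : ℝ) ^ 2 ≤ (G.edgeFinset.card : ℝ))
    (T : Finset V) (hTne : T.Nonempty) (hT : (T.card : ℝ) ≤ d * ε * n)
    (P : Fin r → Finset V)
    (hdisj : ∀ i j : Fin r, i ≠ j → Disjoint (P i) (P j))
    (hcover : Finset.univ.biUnion P = Finset.univ \ T)
    (hpart : ∀ i : Fin r, ∀ v ∈ P i, ∀ w ∈ P i, ¬ G.Adj v w) :
    (((Finset.univ.filter fun e : Sym2 V =>
        ∃ a b : V, e = s(a, b) ∧ ¬ G.Adj a b ∧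
          ∃ i j : Fin r, i ≠ j ∧ a ∈ P i ∧ b ∈ P j).card : ℝ))
      ≤ (d + 1) * ε * (n : ℝ) ^ 2 := by
  classical
  have hr0 : 0 < r := by omega
  obtain ⟨t0, ht0⟩ := hTne
  have hn0 : 0 < n := hcard ▸ Fintype.card_pos_iff.mpr ⟨t0⟩
  have hu : ∀ a : V, ∀ i j : Fin r, a ∈ P i → a ∈ P j → i = j := by
    intro a i j hi hj
    by_contra h
    exact (Finset.disjoint_left.mp (hdisj i j h) hi) hj
  -- the graph of cross-class non-edges
  set K : SimpleGraph V :=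
    { Adj := fun a b => ¬G.Adj a b ∧ ∃ i j : Fin r, i ≠ j ∧ a ∈ P i ∧ b ∈ P j
      symm := by
        constructor
        rintro a b ⟨h1, i, j, hij, ha, hb⟩
        exact ⟨fun h => h1 h.symm, j, i, hij.symm, hb, ha⟩
      loopless := by
        constructor
        rintro a ⟨h1, i, j, hij, ha, hb⟩
        exact hij (hu a i j ha hb) } with hKdef
  -- the graph of within-class pairs
  set L : SimpleGraph V :=
    { Adj := fun a b => a ≠ b ∧ ∃ i : Fin r, a ∈ P i ∧ b ∈ P i
      symm := by constructor; rintro a b ⟨h1, i, ha, hb⟩; exact ⟨h1.symm, i, hb, ha⟩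
      loopless := by constructor; rintro a ⟨h1, _⟩; exact h1 rfl } with hLdef
  have hSK : (Finset.univ.filter fun e : Sym2 V =>
      ∃ a b : V, e = s(a, b) ∧ ¬ G.Adj a b ∧
        ∃ i j : Fin r, i ≠ j ∧ a ∈ P i ∧ b ∈ P j) = K.edgeFinset := by
    ext e
    induction e with
    | h x y =>
      simp only [Finset.mem_filter, Finset.mem_univ, true_and, mem_edgeFinset, mem_edgeSet]
      constructor
      · rintro ⟨a, b, hab, h1, i, j, hij, ha, hb⟩
        rw [Sym2.eq_iff] at hab
        rcases hab with ⟨hxa, hyb⟩ | ⟨hxb, hya⟩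
        · subst hxa; subst hyb; exact ⟨h1, i, j, hij, ha, hb⟩
        · subst hxb; subst hya
          exact ⟨fun h => h1 h.symm, j, i, hij.symm, hb, ha⟩
      · rintro ⟨h1, i, j, hij, ha, hb⟩
        exact ⟨x, y, rfl, h1, i, j, hij, ha, hb⟩
  have hKle : K ≤ Gᶜ := by
    rintro a b ⟨h1, i, j, hij, ha, hb⟩
    rw [compl_adj]
    refine ⟨fun hab => ?_, h1⟩
    subst hab
    exact hij (hu a i j ha hb)
  have hLle : L ≤ Gᶜ := by
    rintro a b ⟨h1, i, ha, hb⟩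
    rw [compl_adj]
    exact ⟨h1, hpart i a ha b hb⟩
  have hKL : Disjoint K L := by
    rw [disjoint_iff_inf_le]
    rintro a b ⟨⟨h1, i, j, hij, ha, hb⟩, ⟨hne, k, ha', hb'⟩⟩
    exact hij ((hu a i k ha ha').trans (hu b k j hb' hb))
  have hcards : K.edgeFinset.card + L.edgeFinset.card ≤ Gᶜ.edgeFinset.card := by
    rw [← Finset.card_union_of_disjoint (SimpleGraph.disjoint_edgeFinset.mpr hKL)]
    exact Finset.card_le_card
      (Finset.union_subset (edgeFinset_mono hKle) (edgeFinset_mono hLle))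
  -- handshake for L
  have hLnf : ∀ i : Fin r, ∀ v ∈ P i, L.neighborFinset v = (P i).erase v := by
    intro i v hv
    ext w
    rw [mem_neighborFinset, Finset.mem_erase]
    constructor
    · rintro ⟨hne, k, hvk, hwk⟩
      exact ⟨fun h => hne h.symm, (hu v k i hvk hv) ▸ hwk⟩
    · rintro ⟨hne, hw⟩
      exact ⟨fun h => hne h.symm, i, hv, hw⟩
  have hLnf0 : ∀ v : V, v ∉ Finset.univ.biUnion P → L.neighborFinset v = ∅ := by
    intro v hv
    ext w
    rw [mem_neighborFinset]
    simp only [Finset.notMem_empty, iff_false]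
    rintro ⟨hne, k, hvk, hwk⟩
    exact hv (Finset.mem_biUnion.mpr ⟨k, Finset.mem_univ k, hvk⟩)
  have hsumdeg : ∑ v : V, L.degree v = ∑ i : Fin r, (P i).card * ((P i).card - 1) := by
    rw [← Finset.sum_subset (Finset.subset_univ (Finset.univ.biUnion P))
      (fun v _ hv => by rw [← card_neighborFinset_eq_degree, hLnf0 v hv, Finset.card_empty])]
    rw [Finset.sum_biUnion (fun x _ y _ hxy => hdisj x y hxy)]
    refine Finset.sum_congr rfl fun i _ => ?_
    rw [Finset.sum_congr rfl (fun v hv => by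
        rw [← card_neighborFinset_eq_degree, hLnf i v hv, Finset.card_erase_of_mem hv]),
      Finset.sum_const, smul_eq_mul]
  have hLhand : 2 * L.edgeFinset.card = ∑ i : Fin r, (P i).card * ((P i).card - 1) := by
    rw [← L.sum_degrees_eq_twice_card_edges, hsumdeg]
  -- class sizes
  have hTsub : T ⊆ Finset.univ := Finset.subset_univ T
  have htn : T.card ≤ n := by
    have := Finset.card_le_card hTsub
    rwa [Finset.card_univ, hcard] at this
  have hsizes : ∑ i : Fin r, (P i).card = n - T.card := by
    rw [← Finset.card_biUnion (fun i _ j _ h => hdisj i j h), hcover,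
      Finset.card_sdiff_of_subset hTsub, Finset.card_univ, hcard]
  -- handshake for G and its complement
  have hGhand := two_mul_ncard_add_compl G
  rw [hcard, ncard_edgeSet_eq, ncard_edgeSet_eq] at hGhand
  -- Turán bound
  have hturan := turanEdges_lower n r hr0
  -- pass to the reals
  rw [hSK]
  set q : ℕ := (n - 1) / r with hq
  have hn1 : (1 : ℝ) ≤ (n : ℝ) := by exact_mod_cast hn0
  have hR2 : (2 : ℝ) ≤ (r : ℝ) := by exact_mod_cast hr
  have hRpos : (0 : ℝ) < (r : ℝ) := by positivity
  have ht1 : (1 : ℝ) ≤ (T.card : ℝ) := by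
    have : 0 < T.card := Finset.card_pos.mpr ⟨t0, ht0⟩
    exact_mod_cast this
  have htnR : (T.card : ℝ) ≤ (n : ℝ) := by exact_mod_cast htn
  have hcastsub : ((n - 1 : ℕ) : ℝ) = (n : ℝ) - 1 := by
    rw [Nat.cast_sub hn0]; norm_num
  have hqR : ((q : ℕ) : ℝ) ≤ ((n : ℝ) - 1) / (r : ℝ) := by
    rw [hq, ← hcastsub]
    exact Nat.cast_div_le
  have hturanR : (n : ℝ) * ((n : ℝ) - 1) ≤ 2 * (turanEdges r n : ℝ) + (n : ℝ) * (q : ℝ) := by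
    have h := (Nat.cast_le (α := ℝ)).mpr hturan
    push_cast at h
    rw [hcastsub] at h
    exact h
  have hGhandR : 2 * (G.edgeFinset.card : ℝ) + 2 * (Gᶜ.edgeFinset.card : ℝ)
      = (n : ℝ) * ((n : ℝ) - 1) := by
    have h := congrArg (Nat.cast : ℕ → ℝ) hGhand
    push_cast at h
    rw [hcastsub] at h
    exact h
  have hcastterm : ∀ c : ℕ, ((c * (c - 1) : ℕ) : ℝ) = (c : ℝ) ^ 2 - (c : ℝ) := by
    intro c
    cases c with
    | zero => simp
    | succ m => push_cast [Nat.succ_sub_one]; ring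
  have hLhandR : 2 * (L.edgeFinset.card : ℝ)
      = ∑ i : Fin r, (((P i).card : ℝ) ^ 2 - ((P i).card : ℝ)) := by
    have h := congrArg (Nat.cast : ℕ → ℝ) hLhand
    rw [Nat.cast_mul, Nat.cast_sum] at h
    rw [Nat.cast_ofNat] at h
    rw [h]
    exact Finset.sum_congr rfl fun i _ => hcastterm _
  have hsizesR : ∑ i : Fin r, ((P i).card : ℝ) = (n : ℝ) - (T.card : ℝ) := by
    have h := congrArg (Nat.cast : ℕ → ℝ) hsizes
    rw [Nat.cast_sum] at h
    rw [h, Nat.cast_sub htn]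
  have hCS : (∑ i : Fin r, ((P i).card : ℝ)) ^ 2
      ≤ (r : ℝ) * ∑ i : Fin r, ((P i).card : ℝ) ^ 2 := by
    have h := sq_sum_le_card_mul_sum_sq
      (s := (Finset.univ : Finset (Fin r))) (f := fun i => ((P i).card : ℝ))
    rwa [Finset.card_univ, Fintype.card_fin] at h
  have hcardsR : (K.edgeFinset.card : ℝ) + (L.edgeFinset.card : ℝ)
      ≤ (Gᶜ.edgeFinset.card : ℝ) := by exact_mod_cast hcards
  -- now pure real arithmetic
  set t : ℝ := (T.card : ℝ)
  set s : ℝ := (n : ℝ) - t with hs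
  have hsum2 : ∑ i : Fin r, ((P i).card : ℝ) ^ 2 ≥ s ^ 2 / (r : ℝ) := by
    rw [ge_iff_le, div_le_iff₀ hRpos]
    calc s ^ 2 = (∑ i : Fin r, ((P i).card : ℝ)) ^ 2 := by rw [hsizesR]
      _ ≤ (r : ℝ) * ∑ i : Fin r, ((P i).card : ℝ) ^ 2 := hCS
      _ = (∑ i : Fin r, ((P i).card : ℝ) ^ 2) * (r : ℝ) := by ring
  have hLlow : 2 * (L.edgeFinset.card : ℝ) ≥ s ^ 2 / (r : ℝ) - s := by
    rw [hLhandR, Finset.sum_sub_distrib, hsizesR]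
    have := hsum2
    linarith
  have hKup : 2 * (K.edgeFinset.card : ℝ)
      ≤ (n : ℝ) * (q : ℝ) + 2 * ε * (n : ℝ) ^ 2 - (s ^ 2 / (r : ℝ) - s) := by
    linarith [hcardsR, hGhandR, hturanR, he, hLlow]
  have hnq : (n : ℝ) * (q : ℝ) ≤ (n : ℝ) * ((n : ℝ) - 1) / (r : ℝ) := by
    calc (n : ℝ) * (q : ℝ) ≤ (n : ℝ) * (((n : ℝ) - 1) / (r : ℝ)) := by
          apply mul_le_mul_of_nonneg_left hqR (by positivity)
      _ = (n : ℝ) * ((n : ℝ) - 1) / (r : ℝ) := by ring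
  -- key bound: n(n-1)/r - s²/r + s ≤ 2 d ε n²
  have hn0R : (0 : ℝ) ≤ (n : ℝ) := by positivity
  have htd : t * (n : ℝ) ≤ d * ε * (n : ℝ) ^ 2 := by
    calc t * (n : ℝ) ≤ (d * ε * (n : ℝ)) * (n : ℝ) := mul_le_mul_of_nonneg_right hT hn0R
      _ = d * ε * (n : ℝ) ^ 2 := by ring
  have hnd : (n : ℝ) ≤ d * ε * (n : ℝ) ^ 2 := by
    have h := mul_le_mul_of_nonneg_right ht1 hn0R
    rw [one_mul] at h
    linarith [htd, h]
  have hkey : (n : ℝ) * ((n : ℝ) - 1) / (r : ℝ) - s ^ 2 / (r : ℝ) + s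
      ≤ 2 * (d * ε * (n : ℝ) ^ 2) := by
    have h1 : (n : ℝ) * ((n : ℝ) - 1) - s ^ 2 ≤ 2 * t * (n : ℝ) := by
      rw [hs]; nlinarith [sq_nonneg t, hn1]
    have h2 : ((n : ℝ) * ((n : ℝ) - 1) - s ^ 2) / (r : ℝ) ≤ (2 * t * (n : ℝ)) / (r : ℝ) := by
      gcongr
    have h3 : (2 * t * (n : ℝ)) / (r : ℝ) ≤ t * (n : ℝ) := by
      rw [div_le_iff₀ hRpos]
      nlinarith [mul_nonneg (mul_nonneg (by linarith : (0:ℝ) ≤ t) hn0R)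
        (by linarith : (0:ℝ) ≤ (r : ℝ) - 2)]
    have h4 : s ≤ (n : ℝ) := by rw [hs]; linarith
    have h5 : (n : ℝ) * ((n : ℝ) - 1) / (r : ℝ) - s ^ 2 / (r : ℝ)
        = ((n : ℝ) * ((n : ℝ) - 1) - s ^ 2) / (r : ℝ) := by ring
    linarith
  linarith [hKup, hnq, hkey]
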